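/- Let A : ℝ^{p₁×p₂} → ℝⁿ be a linear map satisfying the 2r-restricted isometry property with constant R_{2r} < 1, i.e., (1−R_{2r})‖Z‖_F² ≤ ‖A(Z)‖₂² ≤ (1+R_{2r})‖Z‖_F² for all matrices Z of rank at most 2r. Let U ∈ 𝕆_{p₁,r}, V ∈ 𝕆_{p₂,r}, and define the linear map L sending a block matrix W = [[W₀, W₂],[W₁, 0]] (W₀ ∈ ℝ^{r×r}, W₂ ∈ ℝ^{r×(p₂−r)}, W₁ ∈ ℝ^{(p₁−r)×r}) to [U, U⊥] W [V, V⊥]ᵀ. Then for every matrix M in the range of L*, (1−R_{2r})‖M‖_F ≤ ‖L* A* A L(M)‖_F ≤ (1+R_{2r})‖M‖_F. -/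

import Mathlib

open Matrix
noncomputable section

/-- Frobenius norm of a real matrix. -/
def frob {m n : Type*} [Fintype m] [Fintype n] (A : Matrix m n ℝ) : ℝ :=
  Real.sqrt (∑ i, ∑ j, (A i j) ^ 2)

/-- Spectral (operator ℓ²→ℓ²) norm of a real matrix. -/
def spec {m n : Type*} [Fintype m] [Fintype n] [DecidableEq n] (A : Matrix m n ℝ) : ℝ :=
  ‖LinearMap.toContinuousLinearMap (Matrix.toEuclideanLin A)‖

theorem Matrix.isHermitian_transpose_mul_self {m n α : Type*} [CommSemiring α] [StarRing α]
    [TrivialStar α] [Fintype m] (A : Matrix m n α) : (Aᵀ * A).IsHermitian := by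
  rw [IsHermitian, conjTranspose_eq_transpose_of_trivial, transpose_mul, transpose_transpose]

/-- Nuclear norm: sum of singular values (square roots of eigenvalues of AᵀA). -/
def nuc {m n : Type*} [Fintype m] [Fintype n] [DecidableEq n] (A : Matrix m n ℝ) : ℝ :=
  ∑ i, Real.sqrt ((Matrix.isHermitian_transpose_mul_self A).eigenvalues i)

namespace RIPHelper

variable {m n : Type*} [Fintype m] [Fintype n]

/-- Trace inner product on real matrices. -/
def ip (X Y : Matrix m n ℝ) : ℝ := ∑ i, ∑ j, X i j * Y i j

lemma ip_def (X Y : Matrix m n ℝ) : ip X Y = ∑ i, ∑ j, X i j * Y i j := rfl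

lemma ip_comm (X Y : Matrix m n ℝ) : ip X Y = ip Y X := by
  simp [ip, mul_comm]

lemma ip_self_nonneg (X : Matrix m n ℝ) : 0 ≤ ip X X :=
  Finset.sum_nonneg fun i _ => Finset.sum_nonneg fun j _ => mul_self_nonneg _

lemma ip_self_eq (X : Matrix m n ℝ) : ip X X = ∑ i, ∑ j, (X i j) ^ 2 := by
  simp [ip, sq]

lemma frob_eq_sqrt_ip (X : Matrix m n ℝ) : frob X = Real.sqrt (ip X X) := by
  rw [frob, ip_self_eq]

lemma sq_frob (X : Matrix m n ℝ) : frob X ^ 2 = ip X X := by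
  rw [frob_eq_sqrt_ip, Real.sq_sqrt (ip_self_nonneg X)]

lemma frob_nonneg (X : Matrix m n ℝ) : 0 ≤ frob X := Real.sqrt_nonneg _

lemma ip_le (X Y : Matrix m n ℝ) : ip X Y ≤ frob X * frob Y := by
  have h1 : ip X Y = ∑ p : m × n, X p.1 p.2 * Y p.1 p.2 :=
    (Fintype.sum_prod_type (f := fun x : m × n => X x.1 x.2 * Y x.1 x.2)).symm
  have h2 : frob X = Real.sqrt (∑ p : m × n, (X p.1 p.2) ^ 2) :=
    congrArg Real.sqrt (Fintype.sum_prod_type (f := fun x : m × n => (X x.1 x.2) ^ 2)).symm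
  have h3 : frob Y = Real.sqrt (∑ p : m × n, (Y p.1 p.2) ^ 2) :=
    congrArg Real.sqrt (Fintype.sum_prod_type (f := fun x : m × n => (Y x.1 x.2) ^ 2)).symm
  rw [h1, h2, h3]
  exact Real.sum_mul_le_sqrt_mul_sqrt _ _ _

lemma ip_add_left (X Y Z : Matrix m n ℝ) : ip (X + Y) Z = ip X Z + ip Y Z := by
  simp [ip, add_mul, Finset.sum_add_distrib]

lemma ip_add_right (X Y Z : Matrix m n ℝ) : ip X (Y + Z) = ip X Y + ip X Z := by
  simp [ip, mul_add, Finset.sum_add_distrib]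

lemma ip_sub_left (X Y Z : Matrix m n ℝ) : ip (X - Y) Z = ip X Z - ip Y Z := by
  simp [ip, sub_mul, Finset.sum_sub_distrib]

lemma ip_sub_right (X Y Z : Matrix m n ℝ) : ip X (Y - Z) = ip X Y - ip X Z := by
  simp [ip, mul_sub, Finset.sum_sub_distrib]

lemma ip_smul_right (c : ℝ) (X Y : Matrix m n ℝ) : ip X (c • Y) = c * ip X Y := by
  simp [ip, Matrix.smul_apply, smul_eq_mul, Finset.mul_sum, mul_left_comm]

lemma ip_zero_right (X : Matrix m n ℝ) : ip X (0 : Matrix m n ℝ) = 0 := by simp [ip]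

lemma ip_zero_left (X : Matrix m n ℝ) : ip (0 : Matrix m n ℝ) X = 0 := by simp [ip]

lemma ip_expand_add (X Y : Matrix m n ℝ) :
    ip (X + Y) (X + Y) = ip X X + 2 * ip X Y + ip Y Y := by
  rw [ip_add_left, ip_add_right, ip_add_right, ip_comm Y X]; ring

lemma ip_expand_sub (X Y : Matrix m n ℝ) :
    ip (X - Y) (X - Y) = ip X X - 2 * ip X Y + ip Y Y := by
  rw [ip_sub_left, ip_sub_right, ip_sub_right, ip_comm Y X]; ring

lemma frob_smul (c : ℝ) (X : Matrix m n ℝ) : frob (c • X) = |c| * frob X := by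
  have : ∀ i j, ((c • X) i j) ^ 2 = c ^ 2 * (X i j) ^ 2 := by
    intro i j; simp [Matrix.smul_apply, smul_eq_mul, mul_pow]
  simp only [frob, this, ← Finset.mul_sum]
  rw [Real.sqrt_mul (sq_nonneg c), Real.sqrt_sq_eq_abs]

lemma ip_eq_trace (X Y : Matrix m n ℝ) : ip X Y = Matrix.trace (Xᵀ * Y) := by
  simp only [Matrix.trace, Matrix.diag, Matrix.mul_apply, Matrix.transpose_apply]
  rw [ip, Finset.sum_comm]

lemma ip_fromBlocks {a b c d : Type*} [Fintype a] [Fintype b] [Fintype c] [Fintype d]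
    (A : Matrix a c ℝ) (B : Matrix a d ℝ) (C : Matrix b c ℝ) (D : Matrix b d ℝ)
    (A' : Matrix a c ℝ) (B' : Matrix a d ℝ) (C' : Matrix b c ℝ) (D' : Matrix b d ℝ) :
    ip (fromBlocks A B C D) (fromBlocks A' B' C' D') =
      ip A A' + ip B B' + ip C C' + ip D D' := by
  simp only [ip, Fintype.sum_sum_type, Matrix.fromBlocks_apply₁₁, Matrix.fromBlocks_apply₁₂,
    Matrix.fromBlocks_apply₂₁, Matrix.fromBlocks_apply₂₂, Finset.sum_add_distrib]
  ring

lemma Qt_mul_mul {p q r₁ r₂ s₁ s₂ : Type*} [Fintype p] [Fintype q] [Fintype r₁] [Fintype r₂]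
    [Fintype s₁] [Fintype s₂]
    (U : Matrix p r₁ ℝ) (Up : Matrix p r₂ ℝ) (V : Matrix q s₁ ℝ) (Vp : Matrix q s₂ ℝ)
    (Z : Matrix p q ℝ) :
    (fromCols U Up)ᵀ * Z * fromCols V Vp =
      fromBlocks (Uᵀ * Z * V) (Uᵀ * Z * Vp) (Upᵀ * Z * V) (Upᵀ * Z * Vp) := by
  rw [transpose_fromCols, fromRows_mul, fromRows_mul_fromCols]

lemma adj_ip {p q r₁ r₂ s₁ s₂ : Type*} [Fintype p] [Fintype q] [Fintype r₁] [Fintype r₂]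
    [Fintype s₁] [Fintype s₂]
    (U : Matrix p r₁ ℝ) (Up : Matrix p r₂ ℝ) (V : Matrix q s₁ ℝ) (Vp : Matrix q s₂ ℝ)
    (Z : Matrix p q ℝ) (W0 : Matrix r₁ s₁ ℝ) (W2 : Matrix r₁ s₂ ℝ) (W1 : Matrix r₂ s₁ ℝ) :
    ip (fromBlocks (Uᵀ * Z * V) (Uᵀ * Z * Vp) (Upᵀ * Z * V) (0 : Matrix r₂ s₂ ℝ))
        (fromBlocks W0 W2 W1 0) =
      ip Z (fromCols U Up * fromBlocks W0 W2 W1 0 * (fromCols V Vp)ᵀ) := by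
  have key : ∀ (G : Matrix p q ℝ) (W : Matrix (r₁ ⊕ r₂) (s₁ ⊕ s₂) ℝ),
      ip G (fromCols U Up * W * (fromCols V Vp)ᵀ)
        = ip ((fromCols U Up)ᵀ * G * fromCols V Vp) W := by
    intro G W
    rw [ip_eq_trace, ip_eq_trace]
    have ht2 : ((fromCols U Up)ᵀ * G * fromCols V Vp)ᵀ =
        (fromCols V Vp)ᵀ * (Gᵀ * fromCols U Up) := by
      rw [Matrix.transpose_mul, Matrix.transpose_mul, Matrix.transpose_transpose]
    rw [ht2, Matrix.mul_assoc ((fromCols V Vp)ᵀ) _ W,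
      Matrix.trace_mul_comm ((fromCols V Vp)ᵀ) ((Gᵀ * fromCols U Up) * W)]
    simp only [Matrix.mul_assoc]
  rw [key, Qt_mul_mul, ip_fromBlocks, ip_fromBlocks, ip_zero_left, ip_zero_right]

lemma frob_conj {p q a b : Type*} [Fintype p] [Fintype q] [Fintype a] [Fintype b]
    [DecidableEq a] [DecidableEq b]
    (Q : Matrix p a ℝ) (P : Matrix q b ℝ) (hQ : Qᵀ * Q = 1) (hP : Pᵀ * P = 1)
    (W : Matrix a b ℝ) : frob (Q * W * Pᵀ) = frob W := by
  rw [frob_eq_sqrt_ip, frob_eq_sqrt_ip]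
  congr 1
  rw [ip_eq_trace, ip_eq_trace]
  have e : (Q * W * Pᵀ)ᵀ * (Q * W * Pᵀ) = P * ((Wᵀ * W) * Pᵀ) := by
    simp only [Matrix.transpose_mul, Matrix.transpose_transpose, Matrix.mul_assoc]
    rw [← Matrix.mul_assoc Qᵀ Q, hQ, Matrix.one_mul]
  rw [e, Matrix.trace_mul_comm, Matrix.mul_assoc, Matrix.mul_assoc, hP, Matrix.mul_one]

lemma rank_blocks_le {a b c d : Type*} [Fintype a] [Fintype b] [Fintype c] [Fintype d]
    [DecidableEq a] [DecidableEq b] [DecidableEq c] [DecidableEq d]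
    (W0 : Matrix a c ℝ) (W2 : Matrix a d ℝ) (W1 : Matrix b c ℝ) :
    (fromBlocks W0 W2 W1 (0 : Matrix b d ℝ)).rank ≤ Fintype.card a + Fintype.card c := by
  have hfac : fromBlocks W0 W2 W1 (0 : Matrix b d ℝ) =
      (fromBlocks (1 : Matrix a a ℝ) (0 : Matrix a c ℝ) (0 : Matrix b a ℝ) W1) *
        (fromBlocks W0 W2 (1 : Matrix c c ℝ) (0 : Matrix c d ℝ)) := by
    rw [Matrix.fromBlocks_multiply]; simp
  rw [hfac]
  refine le_trans (Matrix.rank_mul_le_right _ _) ?_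
  refine le_trans (Matrix.rank_le_card_height _) ?_
  simp

lemma sum_mul_pol {n : ℕ} (x y : Fin n → ℝ) :
    ∑ i, x i * y i = ((∑ i, (x i + y i) ^ 2) - ∑ i, (x i - y i) ^ 2) / 4 := by
  rw [← Finset.sum_sub_distrib]
  have : ∀ i ∈ Finset.univ, (x i + y i) ^ 2 - (x i - y i) ^ 2 = 4 * (x i * y i) := by
    intro i _; ring
  rw [Finset.sum_congr rfl this, ← Finset.mul_sum]
  ring

end RIPHelper

open RIPHelper

set_option maxHeartbeats 1000000 in
/-- Bounds for the spectrum of L* A* A L over the range of L*, under the 2r-RIP. -/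
theorem stmt_1 {p₁ p₂ r n : ℕ}
    (A : Matrix (Fin p₁) (Fin p₂) ℝ →ₗ[ℝ] (Fin n → ℝ))
    (Astar : (Fin n → ℝ) →ₗ[ℝ] Matrix (Fin p₁) (Fin p₂) ℝ)
    (hadj : ∀ (Z : Matrix (Fin p₁) (Fin p₂) ℝ) (v : Fin n → ℝ),
      ∑ i, A Z i * v i = ∑ i, ∑ j, Z i j * Astar v i j)
    (R2r : ℝ) (hR2r : R2r < 1)
    (hRIP : ∀ Z : Matrix (Fin p₁) (Fin p₂) ℝ, Z.rank ≤ 2 * r →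
      (1 - R2r) * frob Z ^ 2 ≤ ∑ i, A Z i ^ 2 ∧ ∑ i, A Z i ^ 2 ≤ (1 + R2r) * frob Z ^ 2)
    (U : Matrix (Fin p₁) (Fin r) ℝ) (Up : Matrix (Fin p₁) (Fin (p₁ - r)) ℝ)
    (V : Matrix (Fin p₂) (Fin r) ℝ) (Vp : Matrix (Fin p₂) (Fin (p₂ - r)) ℝ)
    (hU : (fromCols U Up)ᵀ * fromCols U Up = 1)
    (hU' : fromCols U Up * (fromCols U Up)ᵀ = 1)
    (hV : (fromCols V Vp)ᵀ * fromCols V Vp = 1)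
    (hV' : fromCols V Vp * (fromCols V Vp)ᵀ = 1)
    (L : Matrix (Fin r ⊕ Fin (p₁ - r)) (Fin r ⊕ Fin (p₂ - r)) ℝ → Matrix (Fin p₁) (Fin p₂) ℝ)
    (hL : ∀ W, L W = fromCols U Up * W * (fromCols V Vp)ᵀ)
    (Lstar : Matrix (Fin p₁) (Fin p₂) ℝ → Matrix (Fin r ⊕ Fin (p₁ - r)) (Fin r ⊕ Fin (p₂ - r)) ℝ)
    (hLstar : ∀ M, Lstar M = fromBlocks (Uᵀ * M * V) (Uᵀ * M * Vp) (Upᵀ * M * V) 0) :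
    ∀ M : Matrix (Fin r ⊕ Fin (p₁ - r)) (Fin r ⊕ Fin (p₂ - r)) ℝ,
      (∃ Z, M = Lstar Z) →
      (1 - R2r) * frob M ≤ frob (Lstar (Astar (A (L M)))) ∧
      frob (Lstar (Astar (A (L M)))) ≤ (1 + R2r) * frob M := by
  intro M hMex
  obtain ⟨Z₀, hM⟩ := hMex
  obtain ⟨a₀, b₀, c₀, hMblk⟩ :
      ∃ a b c, M = fromBlocks a b c (0 : Matrix (Fin (p₁ - r)) (Fin (p₂ - r)) ℝ) :=
    ⟨_, _, _, by rw [hM, hLstar]⟩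
  subst hMblk
  -- key general facts
  have hfrobL : ∀ W, frob (L W) = frob W := by
    intro W; rw [hL]; exact frob_conj _ _ hU hV W
  have hrank : ∀ (a : Matrix (Fin r) (Fin r) ℝ) (b : Matrix (Fin r) (Fin (p₂ - r)) ℝ)
      (c : Matrix (Fin (p₁ - r)) (Fin r) ℝ), (L (fromBlocks a b c 0)).rank ≤ 2 * r := by
    intro a b c
    rw [hL]
    refine le_trans (Matrix.rank_mul_le_left _ _) ?_
    refine le_trans (Matrix.rank_mul_le_right _ _) ?_
    refine le_trans (rank_blocks_le a b c) ?_
    simp [two_mul]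
  have hRIPS : ∀ (a : Matrix (Fin r) (Fin r) ℝ) (b : Matrix (Fin r) (Fin (p₂ - r)) ℝ)
      (c : Matrix (Fin (p₁ - r)) (Fin r) ℝ),
      (1 - R2r) * frob (fromBlocks a b c (0 : Matrix (Fin (p₁ - r)) (Fin (p₂ - r)) ℝ)) ^ 2 ≤
          ∑ i, A (L (fromBlocks a b c 0)) i ^ 2 ∧
        ∑ i, A (L (fromBlocks a b c 0)) i ^ 2 ≤
          (1 + R2r) * frob (fromBlocks a b c (0 : Matrix (Fin (p₁ - r)) (Fin (p₂ - r)) ℝ)) ^ 2 := by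
    intro a b c
    have h1 := hRIP (L (fromBlocks a b c 0)) (hrank a b c)
    rwa [hfrobL] at h1
  have hkey : ∀ (v : Fin n → ℝ) (a : Matrix (Fin r) (Fin r) ℝ)
      (b : Matrix (Fin r) (Fin (p₂ - r)) ℝ) (c : Matrix (Fin (p₁ - r)) (Fin r) ℝ),
      ip (Lstar (Astar v)) (fromBlocks a b c 0) =
        ∑ i, A (L (fromBlocks a b c 0)) i * v i := by
    intro v a b c
    rw [hLstar, adj_ip U Up V Vp (Astar v) a b c, ← hL, ip_comm, ip_def]
    exact (hadj _ v).symm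
  -- additivity of A ∘ L
  have hALadd : ∀ X Y, A (L (X + Y)) = A (L X) + A (L Y) := by
    intro X Y
    have : L (X + Y) = L X + L Y := by
      simp [hL, Matrix.add_mul, Matrix.mul_add]
    rw [this, map_add]
  have hALsub : ∀ X Y, A (L (X - Y)) = A (L X) - A (L Y) := by
    intro X Y
    have : L (X - Y) = L X - L Y := by
      simp [hL, Matrix.sub_mul, Matrix.mul_sub]
    rw [this, map_sub]
  -- name the image blocks
  obtain ⟨a₁, b₁, c₁, hTblk⟩ :
      ∃ a b c, Lstar (Astar (A (L (fromBlocks a₀ b₀ c₀ 0)))) =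
        fromBlocks a b c (0 : Matrix (Fin (p₁ - r)) (Fin (p₂ - r)) ℝ) :=
    ⟨_, _, _, hLstar _⟩
  rw [hTblk]
  set Mb := fromBlocks a₀ b₀ c₀ (0 : Matrix (Fin (p₁ - r)) (Fin (p₂ - r)) ℝ) with hMb
  set Tb := fromBlocks a₁ b₁ c₁ (0 : Matrix (Fin (p₁ - r)) (Fin (p₂ - r)) ℝ) with hTb
  set mm := frob Mb with hmm
  set t := frob Tb with ht
  have hm0 : 0 ≤ mm := frob_nonneg _
  have ht0 : 0 ≤ t := frob_nonneg _
  have hMRIP := hRIPS a₀ b₀ c₀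
  -- ⟨T M, M⟩ identity
  have hipTM : ip Tb Mb = ∑ i, A (L Mb) i * A (L Mb) i := by
    rw [← hTblk]; exact hkey _ a₀ b₀ c₀
  have hsumsq : ∑ i, A (L Mb) i * A (L Mb) i = ∑ i, A (L Mb) i ^ 2 := by
    simp [sq]
  -- polarization bound : for any block matrix N, ⟨T M, N⟩ ≤ ⟨M, N⟩ + R/2(‖M‖²+‖N‖²)
  have hpol : ∀ (a : Matrix (Fin r) (Fin r) ℝ) (b : Matrix (Fin r) (Fin (p₂ - r)) ℝ)
      (c : Matrix (Fin (p₁ - r)) (Fin r) ℝ),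
      ip Tb (fromBlocks a b c 0) ≤ ip Mb (fromBlocks a b c 0) +
        (R2r / 2) * (mm ^ 2 +
          frob (fromBlocks a b c (0 : Matrix (Fin (p₁ - r)) (Fin (p₂ - r)) ℝ)) ^ 2) := by
    intro a b c
    have h1 : ip Tb (fromBlocks a b c 0) =
        ∑ i, A (L (fromBlocks a b c 0)) i * A (L Mb) i := by
      rw [← hTblk]; exact hkey _ a b c
    have hadd2 : (fromBlocks a b c (0 : Matrix (Fin (p₁ - r)) (Fin (p₂ - r)) ℝ)) + Mb =
        fromBlocks (a + a₀) (b + b₀) (c + c₀) 0 := by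
      rw [hMb, Matrix.fromBlocks_add, add_zero]
    have hsub2 : (fromBlocks a b c (0 : Matrix (Fin (p₁ - r)) (Fin (p₂ - r)) ℝ)) - Mb =
        fromBlocks (a - a₀) (b - b₀) (c - c₀) 0 := by
      rw [hMb]; ext (i | i) (j | j) <;> simp [Matrix.sub_apply]
    have hplus : ∑ i, A (L ((fromBlocks a b c 0) + Mb)) i ^ 2 ≤
        (1 + R2r) * frob ((fromBlocks a b c (0 : Matrix (Fin (p₁ - r)) (Fin (p₂ - r)) ℝ)) + Mb) ^ 2 := by
      rw [hadd2]; exact (hRIPS _ _ _).2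
    have hminus : (1 - R2r) * frob ((fromBlocks a b c (0 : Matrix (Fin (p₁ - r)) (Fin (p₂ - r)) ℝ)) - Mb) ^ 2 ≤
        ∑ i, A (L ((fromBlocks a b c 0) - Mb)) i ^ 2 := by
      rw [hsub2]; exact (hRIPS _ _ _).1
    have e2 : ∑ i, A (L (fromBlocks a b c 0)) i * A (L Mb) i =
        ((∑ i, A (L ((fromBlocks a b c 0) + Mb)) i ^ 2) -
          ∑ i, A (L ((fromBlocks a b c 0) - Mb)) i ^ 2) / 4 := by
      rw [hALadd, hALsub, sum_mul_pol]
      simp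
    have e5 : frob ((fromBlocks a b c (0 : Matrix (Fin (p₁ - r)) (Fin (p₂ - r)) ℝ)) + Mb) ^ 2 =
        frob (fromBlocks a b c (0 : Matrix (Fin (p₁ - r)) (Fin (p₂ - r)) ℝ)) ^ 2 +
          2 * ip (fromBlocks a b c 0) Mb + mm ^ 2 := by
      rw [sq_frob, ip_expand_add, sq_frob, hmm, sq_frob]
    have e6 : frob ((fromBlocks a b c (0 : Matrix (Fin (p₁ - r)) (Fin (p₂ - r)) ℝ)) - Mb) ^ 2 =
        frob (fromBlocks a b c (0 : Matrix (Fin (p₁ - r)) (Fin (p₂ - r)) ℝ)) ^ 2 -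
          2 * ip (fromBlocks a b c 0) Mb + mm ^ 2 := by
      rw [sq_frob, ip_expand_sub, sq_frob, hmm, sq_frob]
    rw [h1, e2, ip_comm Mb (fromBlocks a b c 0)]
    rw [e5] at hplus
    rw [e6] at hminus
    nlinarith [hplus, hminus]
  constructor
  · -- lower bound
    have hCS : ip Tb Mb ≤ t * mm := by
      rw [ht, hmm]; exact ip_le _ _
    have hlow : (1 - R2r) * mm ^ 2 ≤ t * mm := by
      calc (1 - R2r) * mm ^ 2 ≤ ∑ i, A (L Mb) i ^ 2 := by rw [hmm]; exact hMRIP.1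
        _ = ip Tb Mb := by rw [hipTM, hsumsq]
        _ ≤ t * mm := hCS
    rcases eq_or_lt_of_le hm0 with hm | hm
    · rw [← hm]; simpa using ht0
    · nlinarith [hlow, hm]
  · -- upper bound
    rcases eq_or_lt_of_le ht0 with htz | htz
    · rw [← htz]
      have h2 : (0 : ℝ) ≤ ∑ i, A (L Mb) i ^ 2 := Finset.sum_nonneg fun i _ => sq_nonneg _
      have h3 : (0 : ℝ) ≤ (1 + R2r) * mm ^ 2 := by
        refine le_trans h2 ?_
        rw [hmm]; exact hMRIP.2
      rcases eq_or_lt_of_le hm0 with hm | hm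
      · rw [← hm]; simp
      · nlinarith [h3, hm]
    · rcases eq_or_lt_of_le hm0 with hm | hm
      · exfalso
        have hp := hpol a₁ b₁ c₁
        rw [← hTb] at hp
        have hCS2 : ip Mb Tb ≤ mm * t := by
          rw [hmm, ht]; exact ip_le _ _
        have hTT : ip Tb Tb = t ^ 2 := by rw [ht]; exact (sq_frob Tb).symm
        nlinarith [hp, hCS2, hTT, htz, hR2r, mul_pos htz htz]
      · have htne : t ≠ 0 := ne_of_gt htz
        have hc : (0 : ℝ) ≤ mm / t := div_nonneg hm0 ht0
        have hsm : (mm / t) • Tb = fromBlocks ((mm / t) • a₁) ((mm / t) • b₁) ((mm / t) • c₁) 0 := by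
          rw [hTb, Matrix.fromBlocks_smul, smul_zero]
        have hp := hpol ((mm / t) • a₁) ((mm / t) • b₁) ((mm / t) • c₁)
        rw [← hsm] at hp
        have hfc : frob ((mm / t) • Tb) = mm := by
          rw [frob_smul, abs_of_nonneg hc, ← ht]
          field_simp
        have hip1 : ip Tb ((mm / t) • Tb) = (mm / t) * t ^ 2 := by
          rw [ip_smul_right, sq_frob, ht]
        have hip2 : ip Mb ((mm / t) • Tb) ≤ mm * mm := by
          calc ip Mb ((mm / t) • Tb) ≤ frob Mb * frob ((mm / t) • Tb) := ip_le _ _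
            _ = mm * mm := by rw [hfc, hmm]
        have hct : (mm / t) * t ^ 2 = mm * t := by
          field_simp
        rw [hfc, hip1, hct] at hp
        nlinarith [hp, hip2, hm, htz]
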